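/- For every δ ∈ (0,1/3) there exists C = C(δ) < ∞ such that for all integers 1 ≤ r ≤ T < ∞, every λ > 0, all reals a ≤ δ⁻¹ and b < δ⁻¹ satisfying |b − a|·r/T ≤ δ⁻¹·(a⁻ + 1)^{1−δ}, and every δ-decorated random walk bridge (S_k)_{k=0}^T, (D_k)_{k=1}^T from a to b of length T, one has | E[ S_r⁻ · 1{ max_{1 ≤ k ≤ r}(S_k + D_k) ≤ λ } ] − E[ S_r⁻ · 1{ max_{1 ≤ k ≤ r}(S_k + D_k) ≤ −λ } ] | ≤ C·(a⁻ + 1)·r·( max_{1 ≤ k ≤ r} P( −λ < S_k + D_k ≤ λ ) )^{1/2}. -/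

import Mathlib

open MeasureTheory ProbabilityTheory


open MeasureTheory ProbabilityTheory

noncomputable section

/-- The negative part `x⁻ = max (-x) 0` of a real number. -/
def nneg (x : ℝ) : ℝ := max (-x) 0

/-- Partial sums `s j = σ²₁ + ⋯ + σ²ⱼ` of the step variances. -/
def psum (σsq : ℕ → ℝ) (j : ℕ) : ℝ := ∑ i ∈ Finset.Icc 1 j, σsq i

/-- A `δ`-decorated random walk bridge from `a` to `b` of length `T` on `(Ω, P)`:
step variances `σsq k ∈ (δ, δ⁻¹)`; `(S k)` a Gaussian process with the bridge mean and
covariance structure (A1); the Markov-type conditional independence property (A2); and the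
stretched-exponential decoration tails (A3). -/
structure DecoratedBridge (δ : ℝ) (T : ℕ) (a b : ℝ)
    {Ω : Type*} [MeasurableSpace Ω] (P : Measure Ω) where
  σsq : ℕ → ℝ
  S : ℕ → Ω → ℝ
  D : ℕ → Ω → ℝ
  meas_S : ∀ k, Measurable (S k)
  meas_D : ∀ k, Measurable (D k)
  σsq_mem : ∀ k, 1 ≤ k → k ≤ T → σsq k ∈ Set.Ioo δ δ⁻¹
  gaussian_lin : ∀ c : ℕ → ℝ, ∃ (m : ℝ) (v : NNReal),
    P.map (fun ω => ∑ k ∈ Finset.range (T + 1), c k * S k ω) = gaussianReal m v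
  mean_S : ∀ k, k ≤ T →
    ∫ ω, S k ω ∂P = (b * psum σsq k + a * (psum σsq T - psum σsq k)) / psum σsq T
  cov_S : ∀ k m, k ≤ m → m ≤ T →
    ∫ ω, (S k ω - ∫ ω', S k ω' ∂P) * (S m ω - ∫ ω', S m ω' ∂P) ∂P
      = psum σsq k * (psum σsq T - psum σsq m) / psum σsq T
  condIndep : ∀ m, 1 ≤ m → m ≤ T - 1 → ∀ A B : Set Ω,
    MeasurableSet[MeasurableSpace.comap
      (fun ω => fun k : Finset.Icc 1 m => (S k.1 ω, D k.1 ω)) inferInstance] A →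
    MeasurableSet[MeasurableSpace.comap
      (fun ω => fun k : Set.Ioc m T => S k.1 ω) inferInstance] B →
    MeasureTheory.condExp (MeasurableSpace.comap (S m) inferInstance) P
        ((A ∩ B).indicator fun _ => (1 : ℝ))
      =ᵐ[P] fun ω =>
        MeasureTheory.condExp (MeasurableSpace.comap (S m) inferInstance) P
          (A.indicator fun _ => (1 : ℝ)) ω *
        MeasureTheory.condExp (MeasurableSpace.comap (S m) inferInstance) P
          (B.indicator fun _ => (1 : ℝ)) ω
  dec_tail : ∀ k, 1 ≤ k → k ≤ T → ∀ t : ℝ, 0 < t →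
    (P {ω | δ⁻¹ * ((min k (T - k) : ℕ) : ℝ) ^ ((1 : ℝ) / 2 - δ) + t < |D k ω|}).toReal
      ≤ δ⁻¹ * Real.exp (-t ^ δ)


open Real in
lemma nneg_nonneg' (x : ℝ) : 0 ≤ nneg x := le_max_right _ _

lemma nneg_add_le (u w : ℝ) : nneg (u + w) ≤ nneg u + |w| := by
  unfold nneg
  rcases le_total (-(u+w)) 0 with h | h
  · rw [max_eq_right h]
    have := le_max_right (-u) (0:ℝ)
    have := abs_nonneg w
    linarith
  · rw [max_eq_left h]
    have h1 := le_max_left (-u) (0:ℝ)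
    have h2 := neg_abs_le w
    linarith

lemma nneg_sq_le (x μ : ℝ) : nneg x ^ 2 ≤ 2*(x-μ)^2 + 2*(nneg μ)^2 := by
  unfold nneg
  rcases le_total (-x) 0 with h | h
  · rw [max_eq_right h]
    nlinarith [sq_nonneg (x-μ), sq_nonneg (max (-μ) 0)]
  · rw [max_eq_left h]
    have h1 : -μ ≤ max (-μ) 0 := le_max_left _ _
    have h2 : (0:ℝ) ≤ max (-μ) 0 := le_max_right _ _
    nlinarith [sq_nonneg (x - μ + max (-μ) 0), sq_nonneg (x - μ - max (-μ) 0)]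


open Real in

lemma integrable_sq_gaussianReal (m : ℝ) (v : NNReal) :
    Integrable (fun x : ℝ => x ^ 2) (gaussianReal m v) := by
  by_cases hv : v = 0
  · rw [hv, gaussianReal_zero_var]
    exact (integrable_const ((m:ℝ)^2)).congr
      ((ae_eq_dirac' (measurable_id.pow_const 2)).symm)
  · rw [gaussianReal_of_var_ne_zero m hv]
    rw [integrable_withDensity_iff (measurable_gaussianPDF m v)
      (ae_of_all _ fun x => ENNReal.ofReal_lt_top)]
    have hv0 : (0:ℝ) < (v:ℝ) := by
      have : 0 < v := lt_of_le_of_ne zero_le (Ne.symm hv)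
      exact_mod_cast this
    have hb : (0:ℝ) < (2*(v:ℝ))⁻¹ := by positivity
    set b : ℝ := (2*(v:ℝ))⁻¹ with hbdef
    have h1 : Integrable (fun x : ℝ => x ^ 2 * rexp (-b * x ^ 2)) := by
      have := integrable_rpow_mul_exp_neg_mul_sq hb (by norm_num : (-1:ℝ) < 2)
      simpa [Real.rpow_two] using this
    have h2 : Integrable (fun x : ℝ => x * rexp (-b * x ^ 2)) :=
      integrable_mul_exp_neg_mul_sq hb
    have h3 : Integrable (fun x : ℝ => rexp (-b * x ^ 2)) :=
      integrable_exp_neg_mul_sq hb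
    have base : Integrable (fun x : ℝ => (x + m) ^ 2 * rexp (-b * x ^ 2)) := by
      refine ((h1.add (h2.const_mul (2*m))).add (h3.const_mul (m^2))).congr
        (ae_of_all _ fun x => ?_)
      simp only [Pi.add_apply]
      ring
    have shifted : Integrable (fun x : ℝ => x ^ 2 * rexp (-b * (x - m) ^ 2)) := by
      refine (base.comp_sub_right m).congr (ae_of_all _ fun x => ?_)
      simp only [Function.comp, sub_add_cancel]
    refine ((shifted.const_mul ((√(2 * π * (v:ℝ)))⁻¹)).congr
      (ae_of_all _ fun x => ?_))
    have harg : -(x-m)^2/(2*(v:ℝ)) = -b*(x-m)^2 := by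
      rw [hbdef]; field_simp
    have htr : ((ENNReal.ofReal (gaussianPDFReal m v x)).toReal) = gaussianPDFReal m v x :=
      ENNReal.toReal_ofReal (gaussianPDFReal_nonneg _ _ _)
    simp only [gaussianPDF_def]
    rw [htr, gaussianPDFReal, harg]
    ring


open Real in

lemma integral_mul_indicator_le_sqrt {Ω : Type} [MeasurableSpace Ω] (P : Measure Ω)
    [IsProbabilityMeasure P] {f : Ω → ℝ} (hfm : Measurable f) (hf : ∀ ω, 0 ≤ f ω)
    {E : Set Ω} (hE : MeasurableSet E)
    (hf2 : Integrable (fun ω => f ω ^ 2) P) :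
    ∫ ω, f ω * E.indicator (fun _ => (1:ℝ)) ω ∂P
      ≤ Real.sqrt ((∫ ω, f ω ^ 2 ∂P) * (P E).toReal) := by
  set M := ∫ ω, f ω ^ 2 ∂P with hMdef
  set p := (P E).toReal with hpdef
  have hM0 : 0 ≤ M := integral_nonneg fun ω => sq_nonneg _
  have hp0 : 0 ≤ p := ENNReal.toReal_nonneg
  have hfint : Integrable f P := by
    refine Integrable.mono' ((hf2.add (integrable_const 1)).div_const 2)
      hfm.aestronglyMeasurable (ae_of_all _ fun ω => ?_)
    rw [Real.norm_eq_abs, abs_of_nonneg (hf ω)]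
    simp only [Pi.add_apply]
    nlinarith [sq_nonneg (f ω - 1)]
  have hind : Integrable (fun ω => f ω * E.indicator (fun _ => (1:ℝ)) ω) P := by
    refine Integrable.mono' hfint
      (hfm.mul ((measurable_const.indicator hE))).aestronglyMeasurable
      (ae_of_all _ fun ω => ?_)
    rw [Real.norm_eq_abs]
    by_cases hω : ω ∈ E
    · simp [Set.indicator_of_mem hω, abs_of_nonneg (hf ω)]
    · simp [Set.indicator_of_notMem hω, hf ω]
  have key : ∀ c : ℝ, 0 < c →
      ∫ ω, f ω * E.indicator (fun _ => (1:ℝ)) ω ∂P ≤ M / (2*c) + c * p / 2 := by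
    intro c hc
    have hrhs : Integrable (fun ω => f ω ^ 2 / (2*c)
        + E.indicator (fun _ => (c/2 : ℝ)) ω) P :=
      (hf2.div_const _).add ((integrable_const _).indicator hE)
    have hmono := integral_mono hind hrhs (fun ω => ?_)
    · rw [integral_add (hf2.div_const _) ((integrable_const _).indicator hE),
        integral_div, integral_indicator_const _ hE] at hmono
      calc ∫ ω, f ω * E.indicator (fun _ => (1:ℝ)) ω ∂P
          ≤ M / (2*c) + (P E).toReal • (c/2) := hmono
        _ = M / (2*c) + c * p / 2 := by rw [smul_eq_mul, hpdef]; ring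
    · by_cases hω : ω ∈ E
      · simp only [Set.indicator_of_mem hω]
        have := hf ω
        rw [mul_one]
        rw [div_add_div _ _ (by positivity : (2*c:ℝ) ≠ 0) (by norm_num : (2:ℝ) ≠ 0)]
        rw [le_div_iff₀ (by positivity)]
        nlinarith [sq_nonneg (f ω - c)]
      · simp only [Set.indicator_of_notMem hω, mul_zero, add_zero]
        positivity
  by_cases hp : p = 0
  · have hPE : P E = 0 := by
      have := measure_lt_top P E
      rw [hpdef] at hp
      exact (ENNReal.toReal_eq_zero_iff _).mp hp |>.resolve_right this.ne
    have hae : (fun ω => f ω * E.indicator (fun _ => (1:ℝ)) ω) =ᵐ[P] 0 := by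
      filter_upwards [measure_eq_zero_iff_ae_notMem.mp hPE] with ω hω
      simp [Set.indicator_of_notMem hω]
    rw [integral_congr_ae hae]
    simp only [Pi.zero_apply, integral_zero]
    positivity
  by_cases hM : M = 0
  · have hf20 : (fun ω => f ω ^ 2) =ᵐ[P] 0 := by
      rw [← integral_eq_zero_iff_of_nonneg (fun ω => sq_nonneg (f ω)) hf2]
      exact hM
    have hae : (fun ω => f ω * E.indicator (fun _ => (1:ℝ)) ω) =ᵐ[P] 0 := by
      filter_upwards [hf20] with ω hω
      have : f ω = 0 := by
        have : f ω ^ 2 = 0 := hω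
        exact pow_eq_zero_iff (by norm_num) |>.mp this
      simp [this]
    rw [integral_congr_ae hae]
    simp only [Pi.zero_apply, integral_zero]
    positivity
  · have hM' : 0 < M := lt_of_le_of_ne hM0 (Ne.symm hM)
    have hp' : 0 < p := lt_of_le_of_ne hp0 (Ne.symm hp)
    have hc : 0 < Real.sqrt M / Real.sqrt p := by positivity
    refine (key _ hc).trans_eq ?_
    have hsM : Real.sqrt M ^ 2 = M := Real.sq_sqrt hM0
    have hsp : Real.sqrt p ^ 2 = p := Real.sq_sqrt hp0
    have hsM0 : 0 < Real.sqrt M := Real.sqrt_pos.mpr hM'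
    have hsp0 : 0 < Real.sqrt p := Real.sqrt_pos.mpr hp'
    rw [Real.sqrt_mul hM0]
    field_simp
    nlinarith [hsM, hsp, hsM0, hsp0]


set_option maxHeartbeats 4000000 in
/-- continuity of the ballot functional in the level of the barrier. -/
theorem drw_ell_level_continuity (δ : ℝ) (hδ : δ ∈ Set.Ioo (0 : ℝ) (1 / 3)) :
    ∃ C : ℝ, 0 < C ∧
      ∀ (r T : ℕ) (hr : 1 ≤ r), r ≤ T → ∀ lam : ℝ, 0 < lam →
      ∀ a b : ℝ, a ≤ δ⁻¹ → b < δ⁻¹ →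
        |b - a| * r / T ≤ δ⁻¹ * (nneg a + 1) ^ (1 - δ) →
      ∀ (Ω : Type) [MeasurableSpace Ω] (P : Measure Ω) [IsProbabilityMeasure P]
        (B : DecoratedBridge δ T a b P),
      |(∫ ω, nneg (B.S r ω) *
            Set.indicator {ω' | ∀ k, 1 ≤ k → k ≤ r → B.S k ω' + B.D k ω' ≤ lam}
              (fun _ => (1 : ℝ)) ω ∂P)
          - ∫ ω, nneg (B.S r ω) *
              Set.indicator {ω' | ∀ k, 1 ≤ k → k ≤ r → B.S k ω' + B.D k ω' ≤ -lam}
                (fun _ => (1 : ℝ)) ω ∂P|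
        ≤ C * (nneg a + 1) * r *
          Real.sqrt ((Finset.Icc 1 r).sup' (Finset.nonempty_Icc.mpr hr) fun k =>
            (P {ω | -lam < B.S k ω + B.D k ω ∧ B.S k ω + B.D k ω ≤ lam}).toReal) := by
  obtain ⟨hδ0, hδ3⟩ := hδ
  have hK0 : (0:ℝ) < δ⁻¹ := by positivity
  set K : ℝ := δ⁻¹ with hKdef
  set Q : ℝ := 2*K + 2*(1+K^3)^2 with hQdef
  have hQ0 : 0 < Q := by positivity
  refine ⟨Real.sqrt Q, Real.sqrt_pos.mpr hQ0, ?_⟩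
  intro r T hr hrT lam hlam a b ha hb hba Ω _ P _ B
  have hT1 : 1 ≤ T := hr.trans hrT
  have hT0 : (0:ℝ) < T := by exact_mod_cast hT1
  have hr1 : (1:ℝ) ≤ (r:ℝ) := by exact_mod_cast hr
  -- measurability of f = nneg ∘ S r
  have hfm : Measurable (fun ω => nneg (B.S r ω)) :=
    (B.meas_S r).neg.max measurable_const
  -- Gaussian law of S r
  obtain ⟨m, v, hmap⟩ := B.gaussian_lin (fun k => if k = r then 1 else 0)
  have hmap' : P.map (B.S r) = gaussianReal m v := by
    have hfun : (fun ω => ∑ k ∈ Finset.range (T + 1),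
        (if k = r then (1:ℝ) else 0) * B.S k ω) = B.S r := by
      funext ω
      rw [Finset.sum_eq_single r]
      · simp
      · intro k _ hk; simp [hk]
      · intro hmem
        exact absurd (Finset.mem_range.mpr (Nat.lt_succ_of_le hrT)) hmem
    rwa [hfun] at hmap
  -- integrability of S r and its square
  have hSsq : Integrable (fun ω => B.S r ω ^ 2) P := by
    have h1 : Integrable (fun x : ℝ => x ^ 2) (P.map (B.S r)) := by
      rw [hmap']; exact integrable_sq_gaussianReal m v
    have := (integrable_map_measure
      (measurable_id.pow_const 2).aestronglyMeasurable
      (B.meas_S r).aemeasurable).mp h1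
    exact this
  have hS1 : Integrable (B.S r) P := by
    refine Integrable.mono' ((hSsq.add (integrable_const 1)).div_const 2)
      (B.meas_S r).aestronglyMeasurable (ae_of_all _ fun ω => ?_)
    rw [Real.norm_eq_abs]
    simp only [Pi.add_apply]
    nlinarith [sq_nonneg (|B.S r ω| - 1), sq_abs (B.S r ω)]
  set μ : ℝ := ∫ ω, B.S r ω ∂P with hμdef
  -- partial sums bounds
  set sr : ℝ := psum B.σsq r with hsrdef
  set sT : ℝ := psum B.σsq T with hsTdef
  have hσ : ∀ i, 1 ≤ i → i ≤ T → δ < B.σsq i ∧ B.σsq i < K := by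
    intro i h1 h2
    exact B.σsq_mem i h1 h2
  have hsr0 : 0 ≤ sr := by
    refine Finset.sum_nonneg fun i hi => ?_
    rw [Finset.mem_Icc] at hi
    linarith [(hσ i hi.1 (hi.2.trans hrT)).1]
  have hsr_le : sr ≤ K * r := by
    have : sr ≤ ∑ _i ∈ Finset.Icc 1 r, K := by
      refine Finset.sum_le_sum fun i hi => ?_
      rw [Finset.mem_Icc] at hi
      exact (hσ i hi.1 (hi.2.trans hrT)).2.le
    simpa [Nat.card_Icc, mul_comm] using this
  have hsT_ge : δ * T ≤ sT := by
    have : ∑ _i ∈ Finset.Icc 1 T, δ ≤ sT := by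
      refine Finset.sum_le_sum fun i hi => ?_
      rw [Finset.mem_Icc] at hi
      exact (hσ i hi.1 hi.2).1.le
    simpa [Nat.card_Icc, mul_comm] using this
  have hsT_pos : 0 < sT := lt_of_lt_of_le (by positivity) hsT_ge
  have hsub : sr ≤ sT := by
    refine Finset.sum_le_sum_of_subset_of_nonneg
      (Finset.Icc_subset_Icc_right hrT) fun i hi _ => ?_
    rw [Finset.mem_Icc] at hi
    linarith [(hσ i hi.1 hi.2).1]
  -- mean and variance
  have hmean := B.mean_S r hrT
  have hμeq : μ = a + (b - a) * (sr / sT) := by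
    rw [hμdef, hmean, ← hsrdef, ← hsTdef]
    field_simp
    ring
  have hvar : ∫ ω, (B.S r ω - μ)^2 ∂P = sr * (sT - sr) / sT := by
    have := B.cov_S r r le_rfl hrT
    simpa [pow_two] using this
  have hcent : Integrable (fun ω => (B.S r ω - μ)^2) P := by
    refine ((hSsq.sub (hS1.const_mul (2*μ))).add (integrable_const (μ^2))).congr
      (ae_of_all _ fun ω => ?_)
    simp only [Pi.add_apply, Pi.sub_apply]
    ring
  -- bound on nneg μ
  have hratio0 : 0 ≤ sr / sT := div_nonneg hsr0 hsT_pos.le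
  have hratio : sr / sT ≤ K^2 * (r / T) := by
    have h1 : sr / sT ≤ (K * r) / (δ * T) :=
      div_le_div₀ (by positivity) hsr_le (by positivity) hsT_ge
    have h2 : (K * r) / (δ * T) = K^2 * ((r:ℝ) / T) := by
      rw [← div_mul_div_comm, hKdef, div_eq_mul_inv, pow_two]
    linarith [h1, h2.le]
  have hone_le : (1:ℝ) ≤ nneg a + 1 := by linarith [nneg_nonneg' a]
  have hnμ : nneg μ ≤ (1 + K^3) * (nneg a + 1) := by
    have hstep : |(b-a) * (sr/sT)| ≤ K^3 * (nneg a + 1) := by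
      rw [abs_mul, abs_of_nonneg hratio0]
      have h1 : |b - a| * (sr/sT) ≤ |b-a| * (K^2 * ((r:ℝ)/T)) :=
        mul_le_mul_of_nonneg_left hratio (abs_nonneg _)
      have h3 : |b-a| * (r:ℝ) / T ≤ K * (nneg a + 1)^((1:ℝ)-δ) := hba
      have h4 : (nneg a + 1:ℝ)^((1:ℝ)-δ) ≤ nneg a + 1 := by
        calc (nneg a + 1:ℝ)^((1:ℝ)-δ) ≤ (nneg a + 1)^(1:ℝ) :=
              Real.rpow_le_rpow_of_exponent_le hone_le (by linarith)
          _ = nneg a + 1 := Real.rpow_one _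
      have h5 : |b-a| * (K^2 * ((r:ℝ)/T)) = K^2 * (|b-a| * (r:ℝ) / T) := by ring
      have h6 : K^2 * (|b-a| * (r:ℝ) / T) ≤ K^2 * (K * (nneg a + 1)) := by
        have : K * (nneg a + 1)^((1:ℝ)-δ) ≤ K * (nneg a + 1) :=
          mul_le_mul_of_nonneg_left h4 hK0.le
        have h7 : |b-a| * (r:ℝ) / T ≤ K * (nneg a + 1) := le_trans h3 this
        exact mul_le_mul_of_nonneg_left h7 (by positivity)
      calc |b-a| * (sr/sT) ≤ K^2 * (|b-a| * (r:ℝ) / T) := by linarith [h1, h5.le]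
        _ ≤ K^2 * (K * (nneg a + 1)) := h6
        _ = K^3 * (nneg a + 1) := by ring
    calc nneg μ = nneg (a + (b-a)*(sr/sT)) := by rw [hμeq]
      _ ≤ nneg a + |(b-a)*(sr/sT)| := nneg_add_le _ _
      _ ≤ nneg a + K^3 * (nneg a + 1) := by linarith
      _ ≤ (1 + K^3) * (nneg a + 1) := by nlinarith [nneg_nonneg' a]
  -- variance bound
  have hv_le : sr * (sT - sr) / sT ≤ K * r := by
    have h1 : sr * (sT - sr) / sT ≤ sr := by
      rw [div_le_iff₀ hsT_pos]
      nlinarith [sq_nonneg sr]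
    linarith
  -- second moment bound
  have hg : Integrable (fun ω => 2*(B.S r ω - μ)^2 + 2*(nneg μ)^2) P :=
    (hcent.const_mul 2).add (integrable_const _)
  have hf2 : Integrable (fun ω => nneg (B.S r ω) ^ 2) P := by
    refine Integrable.mono' hg (hfm.pow_const 2).aestronglyMeasurable
      (ae_of_all _ fun ω => ?_)
    rw [Real.norm_eq_abs, abs_of_nonneg (by positivity)]
    exact nneg_sq_le _ _
  have hM_le : ∫ ω, nneg (B.S r ω) ^ 2 ∂P ≤ Q * ((nneg a + 1)^2 * r) := by
    have h1 : ∫ ω, nneg (B.S r ω) ^ 2 ∂P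
        ≤ ∫ ω, (2*(B.S r ω - μ)^2 + 2*(nneg μ)^2) ∂P :=
      integral_mono hf2 hg fun ω => nneg_sq_le _ _
    have h2 : ∫ ω, (2*(B.S r ω - μ)^2 + 2*(nneg μ)^2) ∂P
        = 2 * (sr * (sT - sr) / sT) + 2*(nneg μ)^2 := by
      rw [integral_add (hcent.const_mul 2) (integrable_const _),
        integral_const_mul, hvar, integral_const]
      simp
    have h3 : (nneg μ)^2 ≤ ((1 + K^3) * (nneg a + 1))^2 :=
      pow_le_pow_left₀ (nneg_nonneg' μ) hnμ 2
    have h4 : 2 * (sr * (sT - sr) / sT) + 2*(nneg μ)^2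
        ≤ 2*K*r + 2*((1 + K^3) * (nneg a + 1))^2 := by linarith
    have hB2 : (1:ℝ) ≤ (nneg a + 1)^2 := by nlinarith [hone_le]
    have e1 : 2*K*(r:ℝ) ≤ 2*K*((nneg a + 1)^2*(r:ℝ)) :=
      mul_le_mul_of_nonneg_left (le_mul_of_one_le_left (by linarith) hB2) (by positivity)
    have e2 : 2*((1 + K^3)*(nneg a + 1))^2 ≤ 2*(1 + K^3)^2*((nneg a + 1)^2*(r:ℝ)) := by
      calc 2*((1 + K^3)*(nneg a + 1))^2
          ≤ 2*((1 + K^3)*(nneg a + 1))^2 * (r:ℝ) :=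
            le_mul_of_one_le_right (by positivity) hr1
        _ = 2*(1 + K^3)^2*((nneg a + 1)^2*(r:ℝ)) := by ring
    have h5 : 2*K*(r:ℝ) + 2*((1 + K^3) * (nneg a + 1))^2
        ≤ Q * ((nneg a + 1)^2 * r) := by
      rw [hQdef]
      calc 2*K*(r:ℝ) + 2*((1 + K^3) * (nneg a + 1))^2
          ≤ 2*K*((nneg a + 1)^2*(r:ℝ)) + 2*(1 + K^3)^2*((nneg a + 1)^2*(r:ℝ)) :=
            add_le_add e1 e2
        _ = (2*K + 2*(1 + K^3)^2) * ((nneg a + 1)^2 * (r:ℝ)) := by ring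
    linarith
  -- the sets
  set A1 : Set Ω := {ω' | ∀ k, 1 ≤ k → k ≤ r → B.S k ω' + B.D k ω' ≤ lam} with hA1def
  set A2 : Set Ω := {ω' | ∀ k, 1 ≤ k → k ≤ r → B.S k ω' + B.D k ω' ≤ -lam} with hA2def
  have hA1m : MeasurableSet A1 := by
    have h : A1 = ⋂ k ∈ Finset.Icc 1 r, {ω | B.S k ω + B.D k ω ≤ lam} := by
      ext ω
      simp [hA1def, Finset.mem_Icc, and_imp]
    rw [h]
    exact Finset.measurableSet_biInter _ fun k _ =>
      measurableSet_le ((B.meas_S k).add (B.meas_D k)) measurable_const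
  have hA2m : MeasurableSet A2 := by
    have h : A2 = ⋂ k ∈ Finset.Icc 1 r, {ω | B.S k ω + B.D k ω ≤ -lam} := by
      ext ω
      simp [hA2def, Finset.mem_Icc, and_imp]
    rw [h]
    exact Finset.measurableSet_biInter _ fun k _ =>
      measurableSet_le ((B.meas_S k).add (B.meas_D k)) measurable_const
  have hsub12 : A2 ⊆ A1 := fun ω hω k h1 h2 => le_trans (hω k h1 h2) (by linarith)
  set E : Set Ω := A1 \ A2 with hEdef
  have hEm : MeasurableSet E := hA1m.diff hA2m
  -- integrability of f * indicators
  have hfint : Integrable (fun ω => nneg (B.S r ω)) P := by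
    refine Integrable.mono' hS1.abs hfm.aestronglyMeasurable (ae_of_all _ fun ω => ?_)
    rw [Real.norm_eq_abs, abs_of_nonneg (nneg_nonneg' _)]
    exact max_le (neg_le_abs _) (abs_nonneg _)
  have hindInt : ∀ (A : Set Ω), MeasurableSet A →
      Integrable (fun ω => nneg (B.S r ω) * A.indicator (fun _ => (1:ℝ)) ω) P := by
    intro A hA
    refine Integrable.mono' hfint
      (hfm.mul (measurable_const.indicator hA)).aestronglyMeasurable
      (ae_of_all _ fun ω => ?_)
    rw [Real.norm_eq_abs]
    by_cases hω : ω ∈ A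
    · simp [Set.indicator_of_mem hω, abs_of_nonneg (nneg_nonneg' _)]
    · simp [Set.indicator_of_notMem hω, nneg_nonneg' (B.S r ω)]
  -- pointwise identity
  have hpt : ∀ ω, nneg (B.S r ω) * A1.indicator (fun _ => (1:ℝ)) ω
      - nneg (B.S r ω) * A2.indicator (fun _ => (1:ℝ)) ω
      = nneg (B.S r ω) * E.indicator (fun _ => (1:ℝ)) ω := by
    intro ω
    by_cases h2 : ω ∈ A2
    · have h1 : ω ∈ A1 := hsub12 h2
      have hE : ω ∉ E := fun hE => hE.2 h2
      simp [Set.indicator_of_mem h1, Set.indicator_of_mem h2, Set.indicator_of_notMem hE]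
    · by_cases h1 : ω ∈ A1
      · have hE : ω ∈ E := ⟨h1, h2⟩
        simp [Set.indicator_of_mem h1, Set.indicator_of_notMem h2, Set.indicator_of_mem hE]
      · have hE : ω ∉ E := fun hE => h1 hE.1
        simp [Set.indicator_of_notMem h1, Set.indicator_of_notMem h2,
          Set.indicator_of_notMem hE]
  have hdiff : (∫ ω, nneg (B.S r ω) * A1.indicator (fun _ => (1:ℝ)) ω ∂P)
      - (∫ ω, nneg (B.S r ω) * A2.indicator (fun _ => (1:ℝ)) ω ∂P)
      = ∫ ω, nneg (B.S r ω) * E.indicator (fun _ => (1:ℝ)) ω ∂P := by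
    rw [← integral_sub (hindInt A1 hA1m) (hindInt A2 hA2m)]
    exact integral_congr_ae (ae_of_all _ fun ω => hpt ω)
  -- measure of E
  set Msup : ℝ := (Finset.Icc 1 r).sup' (Finset.nonempty_Icc.mpr hr) (fun k =>
    (P {ω | -lam < B.S k ω + B.D k ω ∧ B.S k ω + B.D k ω ≤ lam}).toReal) with hMsupdef
  have hMsup0 : 0 ≤ Msup := by
    rw [hMsupdef]
    exact le_trans ENNReal.toReal_nonneg
      (Finset.le_sup' (fun k => (P {ω | -lam < B.S k ω + B.D k ω ∧ B.S k ω + B.D k ω ≤ lam}).toReal) (Finset.mem_Icc.mpr ⟨hr, le_refl r⟩))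
  have hEsub : E ⊆ ⋃ k ∈ Finset.Icc 1 r,
      {ω | -lam < B.S k ω + B.D k ω ∧ B.S k ω + B.D k ω ≤ lam} := by
    rintro ω ⟨h1, h2⟩
    rw [hA2def, Set.mem_setOf_eq] at h2
    push_neg at h2
    obtain ⟨k, hk1, hk2, hk3⟩ := h2
    refine Set.mem_biUnion (Finset.mem_Icc.mpr ⟨hk1, hk2⟩) ?_
    exact ⟨by linarith, h1 k hk1 hk2⟩
  have hPE : (P E).toReal ≤ r * Msup := by
    have h1 : P E ≤ ∑ k ∈ Finset.Icc 1 r,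
        P {ω | -lam < B.S k ω + B.D k ω ∧ B.S k ω + B.D k ω ≤ lam} :=
      (measure_mono hEsub).trans (measure_biUnion_finset_le _ _)
    have h2 : (P E).toReal ≤ ∑ k ∈ Finset.Icc 1 r,
        (P {ω | -lam < B.S k ω + B.D k ω ∧ B.S k ω + B.D k ω ≤ lam}).toReal := by
      rw [← ENNReal.toReal_sum (fun k _ => measure_ne_top P _)]
      exact ENNReal.toReal_le_toReal (measure_ne_top P E)
        (ENNReal.sum_ne_top.mpr (fun k _ => measure_ne_top P _)) |>.mpr h1
    refine h2.trans ?_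
    have h3 : ∑ k ∈ Finset.Icc 1 r,
        (P {ω | -lam < B.S k ω + B.D k ω ∧ B.S k ω + B.D k ω ≤ lam}).toReal
        ≤ (Finset.Icc 1 r).card • Msup := by
      refine Finset.sum_le_card_nsmul _ _ _ fun k hk => ?_
      rw [hMsupdef]
      exact Finset.le_sup' (fun k => (P {ω | -lam < B.S k ω + B.D k ω ∧ B.S k ω + B.D k ω ≤ lam}).toReal) hk
    rw [Nat.card_Icc] at h3
    simpa [nsmul_eq_mul] using h3
  -- conclude
  rw [hdiff, abs_of_nonneg (integral_nonneg fun ω =>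
    mul_nonneg (nneg_nonneg' _) (Set.indicator_nonneg (fun _ _ => zero_le_one) ω))]
  have hCS := integral_mul_indicator_le_sqrt P hfm (fun ω => nneg_nonneg' _) hEm hf2
  refine hCS.trans ?_
  have hprod : (∫ ω, nneg (B.S r ω) ^ 2 ∂P) * (P E).toReal
      ≤ (Q * ((nneg a + 1)^2 * r)) * (r * Msup) := by
    refine mul_le_mul hM_le hPE ENNReal.toReal_nonneg (by positivity)
  refine (Real.sqrt_le_sqrt hprod).trans ?_
  have heq : (Q * ((nneg a + 1)^2 * r)) * ((r:ℝ) * Msup)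
      = Q * (((nneg a + 1) * r)^2 * Msup) := by ring
  rw [heq, Real.sqrt_mul hQ0.le, Real.sqrt_mul (sq_nonneg _),
    Real.sqrt_sq (by positivity)]
  ring_nf
  rfl


end
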